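/- Let a ≥ 0 and let ρ be the largest root of x^3 - ax^2 - (a+3)x - 1. The element γ = (-4-a + (-1-2a)ρ + 2ρ^2)·(-(a+2) - aρ + ρ^2) is a root of the polynomial x^3 - (a^2+3a+9)x^2 + 2(a^2+3a+9)x - (a^2+3a+9), and all three roots of this polynomial are positive real numbers. -/
import Mathlib


theorem simplest_cubic_codifferent_minpoly (a : ℤ) (ha : 0 ≤ a) (ρ : ℝ)
    (hρ : ρ^3 - a*ρ^2 - (a+3)*ρ - 1 = 0) :
    let γ : ℝ := (-4 - a + (-1 - 2*a)*ρ + 2*ρ^2) * (-(a+2) - a*ρ + ρ^2)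
    (γ^3 - (a^2 + 3*a + 9)*γ^2 + 2*(a^2 + 3*a + 9)*γ - (a^2 + 3*a + 9) = 0) ∧
    (∀ x : ℝ, x^3 - (a^2 + 3*a + 9)*x^2 + 2*(a^2 + 3*a + 9)*x - (a^2 + 3*a + 9) = 0
      → 0 < x) := by
  intro γ
  have haR : (0:ℝ) ≤ (a:ℝ) := by exact_mod_cast ha
  constructor
  · show ((-4 - a + (-1 - 2*a)*ρ + 2*ρ^2) * (-(a+2) - a*ρ + ρ^2))^3
      - (a^2 + 3*a + 9)*((-4 - a + (-1 - 2*a)*ρ + 2*ρ^2) * (-(a+2) - a*ρ + ρ^2))^2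
      + 2*(a^2 + 3*a + 9)*((-4 - a + (-1 - 2*a)*ρ + 2*ρ^2) * (-(a+2) - a*ρ + ρ^2))
      - (a^2 + 3*a + 9) = 0
    linear_combination ((-71) + (81)*ρ^1 + (225)*ρ^2 + (-208)*ρ^3 + (-231)*ρ^4 + (186)*ρ^5 + (91)*ρ^6 + (-66)*ρ^7 + (-12)*ρ^8 + (8)*ρ^9 + (-249)*(a:ℝ)^1 + (-52)*(a:ℝ)^1*ρ^1 + (782)*(a:ℝ)^1*ρ^2 + (153)*(a:ℝ)^1*ρ^3 + (-786)*(a:ℝ)^1*ρ^4 + (-105)*(a:ℝ)^1*ρ^5 + (306)*(a:ℝ)^1*ρ^6 + (20)*(a:ℝ)^1*ρ^7 + (-40)*(a:ℝ)^1*ρ^8 + (-305)*(a:ℝ)^2 + (-452)*(a:ℝ)^2*ρ^1 + (562)*(a:ℝ)^2*ρ^2 + (881)*(a:ℝ)^2*ρ^3 + (-282)*(a:ℝ)^2*ρ^4 + (-488)*(a:ℝ)^2*ρ^5 + (40)*(a:ℝ)^2*ρ^6 + (80)*(a:ℝ)^2*ρ^7 + (-162)*(a:ℝ)^3 + (-451)*(a:ℝ)^3*ρ^1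 + (-123)*(a:ℝ)^3*ρ^2 + (498)*(a:ℝ)^3*ρ^3 + (288)*(a:ℝ)^3*ρ^4 + (-120)*(a:ℝ)^3*ρ^5 + (-80)*(a:ℝ)^3*ρ^6 + (-37)*(a:ℝ)^4 + (-155)*(a:ℝ)^4*ρ^1 + (-185)*(a:ℝ)^4*ρ^2 + (-6)*(a:ℝ)^4*ρ^3 + (100)*(a:ℝ)^4*ρ^4 + (40)*(a:ℝ)^4*ρ^5 + (-3)*(a:ℝ)^5 + (-17)*(a:ℝ)^5*ρ^1 + (-34)*(a:ℝ)^5*ρ^2 + (-28)*(a:ℝ)^5*ρ^3 + (-8)*(a:ℝ)^5*ρ^4) * hρ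
  · intro x hx
    by_contra hle
    push_neg at hle
    have hc : (9:ℝ) ≤ (a:ℝ)^2 + 3*(a:ℝ) + 9 := by nlinarith
    nlinarith [sq_nonneg x, mul_nonneg (mul_nonneg haR haR) (sq_nonneg x), mul_nonneg haR (sq_nonneg x)]
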